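/- Let N, R_r, S, K_c, X_t be natural numbers with S < K_c, 1 ≤ K_c, R_r ≤ N, and |𝒟| + X_t > R_r − K_c for a set 𝒟 ⊆ {1,…,N}; set D₁ = 𝒟 ∩ {S+1,…,N}, D₂ = 𝒟 ∩ {1,…,S}, and assume R_r − S − |D₁| − X_t ≥ 1. Define u : {1,…,N} → ℝ by u(n) = 1/K_c for n ∈ {1,…,S}∖𝒟, u(n) = (K_c − S + |D₂|)/(K_c (R_r − S − |D₁| − X_t)) for n ∈ {S+1,…,N}∖𝒟, and u(n) = 0 for n ∈ 𝒟. Then u is nonnegative, satisfies u(n) ≤ 1/K_c on {1,…,S}∖𝒟, satisfies ∑_{n ∈ R∖X} u(n) ≥ 1 for every R ⊆ {1,…,N}∖𝒟 with |R| = R_r − |𝒟| and every X ⊆ R with |X| = X_t, and ∑_{n ∈ {1,…,N}∖𝒟} u(n) = (N − S − |D₁|)/(R_r − S − |D₁| − X_t) − (S − |D₂|)(N − R_r + X_t)/(K_c (R_r − S − |D₁| − X_t)). -/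
import Mathlib

set_option maxHeartbeats 1000000

/-- In the regime `|𝒟| + X_t > R_r - K_c`, the explicitly defined vector
(`1/K_c` on available constrained servers, `(K_c - S + |D₂|)/(K_c (R_r - S - |D₁| - X_t))`
on available unconstrained servers, `0` on dropout servers) is feasible for the
upload-cost linear program and attains the converse lower bound. -/
theorem stmt_10 (N R_r S K_c X_t : ℕ) (hSK : S < K_c) (hK : 1 ≤ K_c) (hRN : R_r ≤ N)
    (𝒟 : Finset ℕ) (h𝒟 : 𝒟 ⊆ Finset.Icc 1 N)
    (D₁ D₂ : Finset ℕ)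
    (hD₁ : D₁ = 𝒟 ∩ Finset.Icc (S + 1) N) (hD₂ : D₂ = 𝒟 ∩ Finset.Icc 1 S)
    (hbig : (R_r : ℤ) - (K_c : ℤ) < (𝒟.card : ℤ) + (X_t : ℤ))
    (h1 : 1 ≤ (R_r : ℤ) - (S : ℤ) - (D₁.card : ℤ) - (X_t : ℤ))
    (u : ℕ → ℝ)
    (hu1 : ∀ n ∈ Finset.Icc 1 S \ 𝒟, u n = 1 / (K_c : ℝ))
    (hu2 : ∀ n ∈ Finset.Icc (S + 1) N \ 𝒟,
      u n = ((K_c : ℝ) - S + D₂.card) / ((K_c : ℝ) * ((R_r : ℝ) - S - D₁.card - X_t)))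
    (hu3 : ∀ n ∈ 𝒟, u n = 0) :
    (∀ n ∈ Finset.Icc 1 N, 0 ≤ u n) ∧
    (∀ n ∈ Finset.Icc 1 S \ 𝒟, u n ≤ 1 / (K_c : ℝ)) ∧
    (∀ R ⊆ Finset.Icc 1 N \ 𝒟, R.card = R_r - 𝒟.card →
      ∀ X ⊆ R, X.card = X_t → 1 ≤ ∑ n ∈ R \ X, u n) ∧
    ∑ n ∈ Finset.Icc 1 N \ 𝒟, u n =
      ((N : ℝ) - S - D₁.card) / ((R_r : ℝ) - S - D₁.card - X_t) -
        ((S : ℝ) - D₂.card) * ((N : ℝ) - R_r + X_t) /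
          ((K_c : ℝ) * ((R_r : ℝ) - S - D₁.card - X_t)) := by
  -- basic card facts
  have hDcard : 𝒟.card = D₁.card + D₂.card := by
    have hunion : 𝒟 = D₁ ∪ D₂ := by
      ext n
      simp only [hD₁, hD₂, Finset.mem_union, Finset.mem_inter, Finset.mem_Icc]
      constructor
      · intro hn
        have h := h𝒟 hn
        rw [Finset.mem_Icc] at h
        rcases le_or_gt n S with h' | h'
        · exact Or.inr ⟨hn, h.1, h'⟩
        · exact Or.inl ⟨hn, by omega, h.2⟩
      · tauto
    have hdisj : Disjoint D₁ D₂ := by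
      rw [Finset.disjoint_left]
      intro n hn1 hn2
      simp only [hD₁, hD₂, Finset.mem_inter, Finset.mem_Icc] at hn1 hn2
      omega
    rw [hunion, Finset.card_union_of_disjoint hdisj]
  have hD₂S : D₂.card ≤ S := by
    have := Finset.card_le_card (show D₂ ⊆ Finset.Icc 1 S by rw [hD₂]; exact Finset.inter_subset_right)
    simpa using this
  have hD₁N : S + D₁.card ≤ N := by
    have := Finset.card_le_card (show D₁ ⊆ Finset.Icc (S+1) N by rw [hD₁]; exact Finset.inter_subset_right)
    simp [Nat.card_Icc] at this
    omega
  have hSN : S ≤ N := by omega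
  have hRD : 𝒟.card + X_t + 1 ≤ R_r := by omega
  -- real facts
  have hKpos : (0:ℝ) < K_c := by exact_mod_cast hK
  have hdpos : (0:ℝ) < (R_r:ℝ) - S - D₁.card - X_t := by
    have h1' : (1:ℝ) ≤ (R_r:ℝ) - S - D₁.card - X_t := by exact_mod_cast h1
    linarith
  set d : ℝ := (R_r:ℝ) - S - D₁.card - X_t with hd
  set v : ℝ := ((K_c : ℝ) - S + D₂.card) / ((K_c : ℝ) * d) with hv
  have hnum : (0:ℝ) ≤ (K_c:ℝ) - S + D₂.card := by
    have ha : (S:ℝ) < K_c := by exact_mod_cast hSK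
    have hb : (0:ℝ) ≤ D₂.card := by positivity
    linarith
  have hv0 : 0 ≤ v := div_nonneg hnum (by positivity)
  have hbig' : (R_r:ℝ) - K_c < (𝒟.card:ℝ) + X_t := by exact_mod_cast hbig
  have hDc : (𝒟.card:ℝ) = D₁.card + D₂.card := by exact_mod_cast hDcard
  have hvK : 1 / (K_c:ℝ) ≤ v := by
    rw [hv, div_le_div_iff₀ hKpos (by positivity)]
    nlinarith [hKpos]
  -- set identities
  have hset1 : Finset.Icc 1 S \ 𝒟 = Finset.Icc 1 S \ D₂ := by
    ext n
    simp only [hD₂, Finset.mem_sdiff, Finset.mem_inter, Finset.mem_Icc]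
    tauto
  have hcard1 : (Finset.Icc 1 S \ 𝒟).card = S - D₂.card := by
    rw [hset1, Finset.card_sdiff_of_subset (by rw [hD₂]; exact Finset.inter_subset_right)]
    simp [Nat.card_Icc]
  have hset2 : Finset.Icc (S+1) N \ 𝒟 = Finset.Icc (S+1) N \ D₁ := by
    ext n
    simp only [hD₁, Finset.mem_sdiff, Finset.mem_inter, Finset.mem_Icc]
    tauto
  have hcard2 : (Finset.Icc (S+1) N \ 𝒟).card = N - S - D₁.card := by
    rw [hset2, Finset.card_sdiff_of_subset (by rw [hD₁]; exact Finset.inter_subset_right)]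
    simp [Nat.card_Icc]
  refine ⟨?_, ?_, ?_, ?_⟩
  · intro n hn
    by_cases hmem : n ∈ 𝒟
    · rw [hu3 n hmem]
    · rw [Finset.mem_Icc] at hn
      by_cases hns : n ≤ S
      · rw [hu1 n (Finset.mem_sdiff.mpr ⟨Finset.mem_Icc.mpr ⟨hn.1, hns⟩, hmem⟩)]
        positivity
      · rw [hu2 n (Finset.mem_sdiff.mpr ⟨Finset.mem_Icc.mpr ⟨by omega, hn.2⟩, hmem⟩)]
        exact hv0
  · intro n hn
    rw [hu1 n hn]
  · intro R hR hRcard X hX hXcard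
    set A : Finset ℕ := (R \ X) ∩ Finset.Icc 1 S with hA
    set B : Finset ℕ := (R \ X) \ Finset.Icc 1 S with hB
    have hsplit : R \ X = A ∪ B := by
      ext n
      simp only [hA, hB, Finset.mem_union, Finset.mem_inter, Finset.mem_sdiff]
      tauto
    have hdisjAB : Disjoint A B := by
      rw [Finset.disjoint_left]
      intro n hn1 hn2
      simp only [hA, hB, Finset.mem_inter, Finset.mem_sdiff] at hn1 hn2
      tauto
    have hsubRX : R \ X ⊆ Finset.Icc 1 N \ 𝒟 := (Finset.sdiff_subset).trans hR
    have hsumA : ∑ n ∈ A, u n = (A.card : ℝ) * (1 / K_c) := by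
      rw [Finset.sum_congr rfl (fun n hn => ?_), Finset.sum_const, nsmul_eq_mul]
      have hn' := hsubRX (Finset.mem_of_mem_inter_left hn)
      rw [Finset.mem_sdiff] at hn'
      have hn2 : n ∈ Finset.Icc 1 S := Finset.mem_of_mem_inter_right hn
      exact hu1 n (Finset.mem_sdiff.mpr ⟨hn2, hn'.2⟩)
    have hsumB : ∑ n ∈ B, u n = (B.card : ℝ) * v := by
      rw [Finset.sum_congr rfl (fun n hn => ?_), Finset.sum_const, nsmul_eq_mul]
      rw [hB, Finset.mem_sdiff] at hn
      have hn' := hsubRX hn.1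
      rw [Finset.mem_sdiff, Finset.mem_Icc] at hn'
      have hns : ¬ (1 ≤ n ∧ n ≤ S) := by simpa [Finset.mem_Icc] using hn.2
      exact hu2 n (Finset.mem_sdiff.mpr ⟨Finset.mem_Icc.mpr ⟨by omega, hn'.1.2⟩, hn'.2⟩)
    have hcardRX : (R \ X).card = R_r - 𝒟.card - X_t := by
      rw [Finset.card_sdiff_of_subset hX, hRcard, hXcard]
    have hcardAB : A.card + B.card = R_r - 𝒟.card - X_t := by
      rw [← hcardRX, hsplit, Finset.card_union_of_disjoint hdisjAB]
    have hAle : A.card ≤ S - D₂.card := by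
      rw [← hcard1]
      apply Finset.card_le_card
      intro n hn
      rw [hA, Finset.mem_inter] at hn
      have h := hsubRX hn.1
      rw [Finset.mem_sdiff] at h
      exact Finset.mem_sdiff.mpr ⟨hn.2, h.2⟩
    -- pass to reals
    have hab : (A.card : ℝ) + B.card = (R_r : ℝ) - 𝒟.card - X_t := by
      have hle : 𝒟.card + X_t ≤ R_r := by omega
      have hcast : ((R_r - 𝒟.card - X_t : ℕ) : ℝ) = (R_r:ℝ) - 𝒟.card - X_t := by
        rw [Nat.sub_sub, Nat.cast_sub hle]
        push_cast
        ring
      rw [← hcast, ← hcardAB]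
      push_cast
      ring
    have haleR : (A.card : ℝ) ≤ (S : ℝ) - D₂.card := by
      have := (Nat.cast_le (α := ℝ)).mpr hAle
      rwa [Nat.cast_sub hD₂S] at this
    have hone : ((S:ℝ) - D₂.card) * (1 / K_c) + d * v = 1 := by
      rw [hv]
      field_simp
      ring
    rw [hsplit, Finset.sum_union hdisjAB, hsumA, hsumB]
    nlinarith [mul_nonneg (sub_nonneg.2 haleR) (sub_nonneg.2 hvK),
      mul_nonneg (le_of_lt hKpos) hv0]
  · have hsplitN : Finset.Icc 1 N \ 𝒟 = (Finset.Icc 1 S \ 𝒟) ∪ (Finset.Icc (S+1) N \ 𝒟) := by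
      ext n
      simp only [Finset.mem_union, Finset.mem_sdiff, Finset.mem_Icc]
      constructor
      · intro hn
        rcases le_or_gt n S with h | h
        · exact Or.inl ⟨⟨hn.1.1, h⟩, hn.2⟩
        · exact Or.inr ⟨⟨h, hn.1.2⟩, hn.2⟩
      · intro hn
        rcases hn with ⟨⟨ha, hb⟩, h3⟩ | ⟨⟨ha, hb⟩, h3⟩ <;> exact ⟨⟨by omega, by omega⟩, h3⟩
    have hdisjN : Disjoint (Finset.Icc 1 S \ 𝒟) (Finset.Icc (S+1) N \ 𝒟) := by
      rw [Finset.disjoint_left]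
      intro n hn1 hn2
      simp only [Finset.mem_sdiff, Finset.mem_Icc] at hn1 hn2
      omega
    rw [hsplitN, Finset.sum_union hdisjN,
      Finset.sum_congr rfl hu1, Finset.sum_congr rfl hu2,
      Finset.sum_const, Finset.sum_const, nsmul_eq_mul, nsmul_eq_mul,
      hcard1, hcard2]
    have c1 : ((S - D₂.card : ℕ) : ℝ) = (S:ℝ) - D₂.card := by
      rw [Nat.cast_sub hD₂S]
    have c2 : ((N - S - D₁.card : ℕ) : ℝ) = (N:ℝ) - S - D₁.card := by
      rw [Nat.sub_sub, Nat.cast_sub (by omega)]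
      push_cast
      ring
    rw [c1, c2, hv]
    rw [div_sub_div _ _ (ne_of_gt hdpos) (by positivity : ((K_c:ℝ) * d) ≠ 0),
      eq_div_iff (by positivity : ((R_r:ℝ) - S - ↑D₁.card - ↑X_t) * ((K_c:ℝ) * d) ≠ 0)]
    field_simp
    rw [hd]
    ring
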